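/- Let C : D(C) ⊆ H → Y be a closed densely-defined linear operator between Hilbert spaces, and B : Y → X a bounded linear operator such that C*B* is densely defined. Then the closure of BC equals (C*B*)*. -/

import Mathlib

open LinearPMap

section GeneralAdjoint

variable {E F : Type*}
  [NormedAddCommGroup E] [InnerProductSpace ℝ E] [CompleteSpace E]
  [NormedAddCommGroup F] [InnerProductSpace ℝ F] [CompleteSpace F]

local notation "⟪" x ", " y "⟫" => @inner ℝ _ _ x y

/-- Characterization of the graph of the adjoint of a densely defined operator. -/
lemma mem_adjoint_graph_iff {T : E →ₗ.[ℝ] F} (hT : Dense (T.domain : Set E))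
    {y : F} {x : E} :
    (y, x) ∈ T.adjoint.graph ↔ ∀ u : T.domain, ⟪x, (u : E)⟫ = ⟪y, T u⟫ := by
  rw [LinearPMap.mem_graph_iff]
  constructor
  · rintro ⟨v, hv1, hv2⟩ u
    simp only at hv1 hv2
    rw [← hv1, ← hv2]
    exact LinearPMap.adjoint_isFormalAdjoint hT v u
  · intro h
    have hy : y ∈ T.adjoint.domain :=
      LinearPMap.mem_adjoint_domain_of_exists _ ⟨x, h⟩
    exact ⟨⟨y, hy⟩, rfl, LinearPMap.adjoint_apply_eq hT _ h⟩

/-- The graph of a partial linear map, viewed inside the `L²` product. -/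
noncomputable def graphL2 (T : E →ₗ.[ℝ] F) : Submodule ℝ (WithLp 2 (E × F)) :=
  T.graph.comap (WithLp.linearEquiv 2 ℝ (E × F) : WithLp 2 (E × F) →ₗ[ℝ] E × F)

lemma mem_graphL2_iff (T : E →ₗ.[ℝ] F) (z : WithLp 2 (E × F)) :
    z ∈ graphL2 T ↔ (z.fst, z.snd) ∈ T.graph := Iff.rfl

/-- The orthogonal complement of the (rotated) graph is the graph of the adjoint. -/
lemma mem_graphL2_orthogonal_iff {T : E →ₗ.[ℝ] F} (hT : Dense (T.domain : Set E))
    (z : WithLp 2 (E × F)) :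
    z ∈ (graphL2 T)ᗮ ↔ (z.snd, -z.fst) ∈ T.adjoint.graph := by
  rw [Submodule.mem_orthogonal, mem_adjoint_graph_iff hT]
  constructor
  · intro h u
    have hw : ((WithLp.equiv 2 (E × F)).symm ((u : E), T u)) ∈ graphL2 T := by
      rw [mem_graphL2_iff]
      exact T.mem_graph u
    have h0 := h _ hw
    rw [WithLp.prod_inner_apply] at h0
    simp only [WithLp.equiv_symm_apply, WithLp.ofLp_toLp, WithLp.ofLp_fst, WithLp.ofLp_snd, WithLp.toLp_fst, WithLp.toLp_snd] at h0
    rw [inner_neg_left]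
    have c1 := real_inner_comm z.fst ((u : E))
    have c2 := real_inner_comm z.snd (T u)
    linarith
  · intro h w hw
    rw [mem_graphL2_iff, LinearPMap.mem_graph_iff] at hw
    obtain ⟨u, hu1, hu2⟩ := hw
    have h0 := h u
    simp only [WithLp.prod_inner_apply, WithLp.ofLp_fst, WithLp.ofLp_snd]
    simp only at hu1 hu2
    rw [← hu1, ← hu2]
    rw [inner_neg_left] at h0
    have c1 := real_inner_comm z.fst ((u : E))
    have c2 := real_inner_comm z.snd (T u)
    linarith

/-- The double orthogonal complement of the graph is the graph of the double adjoint. -/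
lemma graphL2_orthogonal_orthogonal {T : E →ₗ.[ℝ] F} (hT : Dense (T.domain : Set E))
    (hT' : Dense (T.adjoint.domain : Set F)) :
    (graphL2 T)ᗮᗮ = graphL2 T.adjoint.adjoint := by
  ext z
  rw [mem_graphL2_iff, mem_adjoint_graph_iff hT', Submodule.mem_orthogonal]
  constructor
  · intro h v
    -- use the element `(-(T† v), v)` of `(graphL2 T)ᗮ`
    have hm : ((WithLp.equiv 2 (E × F)).symm (-(T.adjoint v), (v : F))) ∈ (graphL2 T)ᗮ := by
      rw [mem_graphL2_orthogonal_iff hT]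
      simp only [WithLp.equiv_symm_apply, WithLp.ofLp_toLp, WithLp.ofLp_fst, WithLp.ofLp_snd, WithLp.toLp_fst, WithLp.toLp_snd, neg_neg]
      exact T.adjoint.mem_graph v
    have h0 := h _ hm
    rw [WithLp.prod_inner_apply] at h0
    simp only [WithLp.equiv_symm_apply, WithLp.ofLp_toLp, WithLp.ofLp_fst, WithLp.ofLp_snd, WithLp.toLp_fst, WithLp.toLp_snd] at h0
    rw [inner_neg_left] at h0
    have c1 := real_inner_comm z.snd ((v : F))
    have c2 := real_inner_comm z.fst (T.adjoint v)
    linarith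
  · intro h m hm
    rw [mem_graphL2_orthogonal_iff hT, LinearPMap.mem_graph_iff] at hm
    obtain ⟨v, hv1, hv2⟩ := hm
    simp only at hv1 hv2
    simp only [WithLp.prod_inner_apply, WithLp.ofLp_fst, WithLp.ofLp_snd]
    have h0 := h v
    rw [hv1, hv2, inner_neg_right] at h0
    have c1 := real_inner_comm z.fst m.fst
    have c2 := real_inner_comm z.snd m.snd
    linarith

/-- The `L²` product homeomorphism. -/
noncomputable def prodL2Homeo (E F : Type*) [NormedAddCommGroup E] [InnerProductSpace ℝ E]
    [NormedAddCommGroup F] [InnerProductSpace ℝ F] : WithLp 2 (E × F) ≃ₜ E × F :=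
  (WithLp.prodContinuousLinearEquiv 2 ℝ E F).toHomeomorph

/-- The key transfer lemma: the topological closure of the graph equals the graph of the
double adjoint. -/
lemma graph_topologicalClosure_eq {T : E →ₗ.[ℝ] F} (hT : Dense (T.domain : Set E))
    (hT' : Dense (T.adjoint.domain : Set F)) :
    T.graph.topologicalClosure = T.adjoint.adjoint.graph := by
  apply SetLike.ext'
  let ec := prodL2Homeo E F
  have himg : ∀ S : E →ₗ.[ℝ] F, ec '' (graphL2 S : Set (WithLp 2 (E × F))) = (S.graph : Set (E × F)) := by
    intro S
    have : (graphL2 S : Set (WithLp 2 (E × F))) = ec ⁻¹' (S.graph : Set (E × F)) := by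
      ext z; exact Iff.rfl
    rw [this, Set.image_preimage_eq _ ec.surjective]
  calc (T.graph.topologicalClosure : Set (E × F))
      = closure (T.graph : Set (E × F)) := rfl
    _ = closure (ec '' (graphL2 T : Set (WithLp 2 (E × F)))) := by rw [himg]
    _ = ec '' closure (graphL2 T : Set (WithLp 2 (E × F))) := (ec.image_closure _).symm
    _ = ec '' ((graphL2 T).topologicalClosure : Set (WithLp 2 (E × F))) := rfl
    _ = ec '' ((graphL2 T)ᗮᗮ : Set (WithLp 2 (E × F))) := by
        rw [Submodule.orthogonal_orthogonal_eq_closure]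
    _ = ec '' (graphL2 T.adjoint.adjoint : Set (WithLp 2 (E × F))) := by
        rw [graphL2_orthogonal_orthogonal hT hT']
    _ = (T.adjoint.adjoint.graph : Set (E × F)) := himg _

/-- A densely defined operator with densely defined adjoint is closable, and its closure is
the double adjoint. -/
lemma isClosable_and_closure_eq_adjoint_adjoint {T : E →ₗ.[ℝ] F}
    (hT : Dense (T.domain : Set E)) (hT' : Dense (T.adjoint.domain : Set F)) :
    T.IsClosable ∧ T.closure = T.adjoint.adjoint := by
  have hgraph := graph_topologicalClosure_eq hT hT'
  have hclosable : T.IsClosable := ⟨T.adjoint.adjoint, hgraph⟩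
  refine ⟨hclosable, ?_⟩
  apply LinearPMap.eq_of_eq_graph
  rw [← hclosable.graph_closure_eq_closure_graph, hgraph]

end GeneralAdjoint

variable {H Y X : Type*}
  [NormedAddCommGroup H] [InnerProductSpace ℝ H] [CompleteSpace H]
  [NormedAddCommGroup Y] [InnerProductSpace ℝ Y] [CompleteSpace Y]
  [NormedAddCommGroup X] [InnerProductSpace ℝ X] [CompleteSpace X]

/-- The composition `B ∘ C` of a bounded operator `B` with a partially defined operator `C`;
its domain is `D(C)`. -/
noncomputable def clmCompPMap (B : Y →L[ℝ] X) (C : H →ₗ.[ℝ] Y) : H →ₗ.[ℝ] X :=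
  { domain := C.domain
    toFun := (B : Y →ₗ[ℝ] X).comp C.toFun }

/-- The composition `T ∘ B` of a partially defined operator `T` with a bounded operator `B`;
its domain is `{x | B x ∈ D(T)}`. -/
noncomputable def pMapCompCLM (T : Y →ₗ.[ℝ] H) (B : X →L[ℝ] Y) : X →ₗ.[ℝ] H :=
  { domain := T.domain.comap (B : X →ₗ[ℝ] Y)
    toFun := T.toFun.comp ((B : X →ₗ[ℝ] Y).restrict fun _ hx => hx) }

local notation "⟪" x ", " y "⟫" => @inner ℝ _ _ x y

lemma clmCompPMap_apply (B : Y →L[ℝ] X) (C : H →ₗ.[ℝ] Y) (u : (clmCompPMap B C).domain) :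
    (clmCompPMap B C) u = B (C ⟨(u : H), u.2⟩) := rfl

lemma pMapCompCLM_apply (T : Y →ₗ.[ℝ] H) (B : X →L[ℝ] Y)
    (v : (pMapCompCLM T B).domain) :
    (pMapCompCLM T B) v = T ⟨B (v : X), v.2⟩ := rfl

/-- The adjoint of `B ∘ C` is `C† ∘ B*`. -/
lemma adjoint_clmCompPMap (C : H →ₗ.[ℝ] Y) (hCdense : Dense (C.domain : Set H))
    (B : Y →L[ℝ] X) :
    (clmCompPMap B C).adjoint = pMapCompCLM C.adjoint (ContinuousLinearMap.adjoint B) := by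
  have hTdense : Dense ((clmCompPMap B C).domain : Set H) := hCdense
  apply le_antisymm
  · -- `(BC)† ≤ C† B*`
    have hmem : ∀ x ∈ (clmCompPMap B C).adjoint.domain,
        ContinuousLinearMap.adjoint B x ∈ C.adjoint.domain := by
      intro x hx
      apply LinearPMap.mem_adjoint_domain_of_exists
      refine ⟨(clmCompPMap B C).adjoint ⟨x, hx⟩, fun u => ?_⟩
      have h1 := LinearPMap.adjoint_isFormalAdjoint hTdense ⟨x, hx⟩ u
      rw [h1]; exact (ContinuousLinearMap.adjoint_inner_left B (C u) x).symm
    constructor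
    · exact fun x hx => hmem x hx
    · intro a b hab
      -- show `(BC)† a = (C† B*) b`
      symm
      rw [pMapCompCLM_apply]
      apply LinearPMap.adjoint_apply_eq hCdense
      intro u
      have h1 := LinearPMap.adjoint_isFormalAdjoint hTdense a u
      change _ = ⟪(a : X), B (C u)⟫ at h1
      rw [h1, hab, ContinuousLinearMap.adjoint_inner_left]
  · -- `C† B* ≤ (BC)†` via formal adjointness
    apply LinearPMap.IsFormalAdjoint.le_adjoint hTdense
    intro u v
    have hBv : (ContinuousLinearMap.adjoint B) (v : X) ∈ C.adjoint.domain := v.2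
    show ⟪B (C ⟨(u : H), u.2⟩), (v : X)⟫ =
      ⟪(u : H), C.adjoint ⟨(ContinuousLinearMap.adjoint B) (v : X), hBv⟩⟫
    have e1 : ⟪B (C ⟨(u : H), u.2⟩), (v : X)⟫ = ⟪(v : X), B (C ⟨(u : H), u.2⟩)⟫ :=
      real_inner_comm _ _
    have e2 : ⟪(v : X), B (C ⟨(u : H), u.2⟩)⟫ =
        ⟪(ContinuousLinearMap.adjoint B) (v : X), C ⟨(u : H), u.2⟩⟫ :=
      (ContinuousLinearMap.adjoint_inner_left _ _ _).symm
    have e3 : ⟪C.adjoint ⟨(ContinuousLinearMap.adjoint B) (v : X), hBv⟩, (u : H)⟫ =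
        ⟪(ContinuousLinearMap.adjoint B) (v : X), C ⟨(u : H), u.2⟩⟫ :=
      LinearPMap.adjoint_isFormalAdjoint hCdense
        ⟨(ContinuousLinearMap.adjoint B) (v : X), hBv⟩ ⟨(u : H), u.2⟩
    have e4 : ⟪(u : H), C.adjoint ⟨(ContinuousLinearMap.adjoint B) (v : X), hBv⟩⟫ =
        ⟪C.adjoint ⟨(ContinuousLinearMap.adjoint B) (v : X), hBv⟩, (u : H)⟫ :=
      real_inner_comm _ _
    linarith

/-- If `C` is a closed densely defined operator from `H` to `Y`, `B : Y → X` is bounded, and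
`C* B*` is densely defined, then `BC` is closable and its closure equals `(C* B*)*`. -/
theorem closure_clm_comp_eq_adjoint (C : H →ₗ.[ℝ] Y) (hC : C.IsClosed)
    (hCdense : Dense (C.domain : Set H)) (B : Y →L[ℝ] X)
    (hdense : Dense ((pMapCompCLM C.adjoint (ContinuousLinearMap.adjoint B)).domain : Set X)) :
    (clmCompPMap B C).IsClosable ∧
      (clmCompPMap B C).closure =
        (pMapCompCLM C.adjoint (ContinuousLinearMap.adjoint B)).adjoint := by
  have hadj := adjoint_clmCompPMap C hCdense B
  have hTdense : Dense ((clmCompPMap B C).domain : Set H) := hCdense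
  have hT'dense : Dense (((clmCompPMap B C).adjoint).domain : Set X) := by
    rw [hadj]; exact hdense
  obtain ⟨h1, h2⟩ := isClosable_and_closure_eq_adjoint_adjoint hTdense hT'dense
  exact ⟨h1, by rw [h2, hadj]⟩
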